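/- For every ω ∈ Ω, every n, and every word v of length n, the subgroup L_{n,ω} acts level transitively on the subtree vX*: for every m and any two words u₁, u₂ of length m, there exists h ∈ L_{n,ω} with h(vu₁) = vu₂. -/

import Mathlib

/-!  Common setup: the group `Aut(X*)` of automorphisms of the rooted binary tree,
the Grigorchuk generators `a, b_ω, c_ω, d_ω`, and the subgroups `G_ω`, `L_ω`. -/

/-- Finite words over `X = {0,1}`: vertices of the rooted binary tree. -/
abbrev Word := List Bool

/-- `Aut(X*)`: bijections of the set of words which preserve word length
(hence fix the empty word) and preserve the prefix relation, as a subgroup of the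
permutation group of `Word`. -/
def TreeAut : Subgroup (Equiv.Perm Word) where
  carrier := {g | (∀ w : Word, (g w).length = w.length) ∧
      ∀ u v : Word, u <+: v ↔ g u <+: g v}
  one_mem' := ⟨fun _ => rfl, fun _ _ => Iff.rfl⟩
  mul_mem' := by
    rintro g h ⟨hg1, hg2⟩ ⟨hh1, hh2⟩
    refine ⟨fun w => ?_, fun u v => ?_⟩
    · simpa using (hg1 (h w)).trans (hh1 w)
    · simpa using (hh2 u v).trans (hg2 (h u) (h v))
  inv_mem' := by
    rintro g ⟨hg1, hg2⟩
    refine ⟨fun w => ?_, fun u v => ?_⟩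
    · have := hg1 (g⁻¹ w)
      rw [Equiv.Perm.coe_inv, Equiv.apply_symm_apply] at this
      exact this.symm
    · have := (hg2 (g⁻¹ u) (g⁻¹ v)).symm
      simpa using this

/-- Application of a tree automorphism to a word. -/
def ap (g : ↥TreeAut) (w : Word) : Word := (g : Equiv.Perm Word) w

/-- The root permutation `a` (as a map): `a(0v) = 1v`, `a(1v) = 0v`. -/
def aFun : Word → Word
  | [] => []
  | x :: v => (!x) :: v

/-- The common recursive pattern of the maps `b_ω, c_ω, d_ω`: on `0v` act by the
identity if `ω 0 = k` and by `a` otherwise, on `1v` recurse with the shifted sequence.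
(`k = 2` gives `b`, `k = 1` gives `c`, `k = 0` gives `d`.) -/
def genFun (k : Fin 3) : (ℕ → Fin 3) → Word → Word
  | _, [] => []
  | ω, false :: v => false :: (if ω 0 = k then v else aFun v)
  | ω, true :: v => true :: genFun k (fun n => ω (n + 1)) v

lemma aFun_invol : Function.Involutive aFun := by
  intro w; cases w with
  | nil => rfl
  | cons x v => simp [aFun]

lemma aFun_length : ∀ w : Word, (aFun w).length = w.length := by
  intro w; cases w <;> simp [aFun]

lemma aFun_prefix : ∀ u v : Word, u <+: v → aFun u <+: aFun v := by
  intro u v h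
  cases u with
  | nil => simp [aFun]
  | cons x u' =>
    cases v with
    | nil => simp at h
    | cons y v' =>
      rw [List.cons_prefix_cons] at h
      obtain ⟨rfl, h2⟩ := h
      simpa [aFun, List.cons_prefix_cons] using h2

lemma genFun_length (k : Fin 3) : ∀ (w : Word) (ω : ℕ → Fin 3),
    (genFun k ω w).length = w.length
  | [], _ => rfl
  | false :: v, ω => by
    by_cases h : ω 0 = k <;> simp [genFun, h, aFun_length]
  | true :: v, ω => by
    simp [genFun, genFun_length k v]

lemma genFun_invol (k : Fin 3) : ∀ (w : Word) (ω : ℕ → Fin 3),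
    genFun k ω (genFun k ω w) = w
  | [], _ => rfl
  | false :: v, ω => by
    by_cases h : ω 0 = k <;> simp [genFun, h, aFun_invol v]
  | true :: v, ω => by
    simp [genFun, genFun_invol k v]

lemma genFun_prefix (k : Fin 3) : ∀ (u v : Word) (ω : ℕ → Fin 3),
    u <+: v → genFun k ω u <+: genFun k ω v
  | [], v, ω, _ => by simp [genFun]
  | x :: u', [], ω, h => by simp at h
  | x :: u', y :: v', ω, h => by
    rw [List.cons_prefix_cons] at h
    obtain ⟨rfl, h2⟩ := h
    cases x with
    | false =>
      by_cases h0 : ω 0 = k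
      · simpa [genFun, h0, List.cons_prefix_cons] using h2
      · simpa [genFun, h0, List.cons_prefix_cons] using aFun_prefix u' v' h2
    | true =>
      simpa [genFun, List.cons_prefix_cons] using genFun_prefix k u' v' _ h2

/-- Build an element of `Aut(X*)` from an involutive, length-preserving,
prefix-preserving map. -/
def mkAut (f : Word → Word) (hinv : Function.Involutive f)
    (hlen : ∀ w, (f w).length = w.length)
    (hpre : ∀ u v : Word, u <+: v → f u <+: f v) : ↥TreeAut :=
  ⟨hinv.toPerm, by
    refine ⟨fun w => ?_, fun u v => ⟨fun h => ?_, fun h => ?_⟩⟩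
    · simpa using hlen w
    · simpa using hpre u v h
    · have := hpre _ _ (by simpa using h)
      simpa [hinv u, hinv v] using this⟩

/-- The automorphism `a`. -/
def aAut : ↥TreeAut := mkAut aFun aFun_invol aFun_length aFun_prefix

/-- The automorphism `b_ω`. -/
def bAut (ω : ℕ → Fin 3) : ↥TreeAut :=
  mkAut (genFun 2 ω) (fun w => genFun_invol 2 w ω) (fun w => genFun_length 2 w ω)
    (fun u v h => genFun_prefix 2 u v ω h)

/-- The automorphism `c_ω`. -/
def cAut (ω : ℕ → Fin 3) : ↥TreeAut :=
  mkAut (genFun 1 ω) (fun w => genFun_invol 1 w ω) (fun w => genFun_length 1 w ω)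
    (fun u v h => genFun_prefix 1 u v ω h)

/-- The automorphism `d_ω`. -/
def dAut (ω : ℕ → Fin 3) : ↥TreeAut :=
  mkAut (genFun 0 ω) (fun w => genFun_invol 0 w ω) (fun w => genFun_length 0 w ω)
    (fun u v h => genFun_prefix 0 u v ω h)

/-- `G_ω = ⟨a, b_ω, c_ω, d_ω⟩`. -/
def Ggrp (ω : ℕ → Fin 3) : Subgroup ↥TreeAut :=
  Subgroup.closure {aAut, bAut ω, cAut ω, dAut ω}

/-- `L_ω = ⟨a b_ω, d_ω⟩`. -/
def Lgrp (ω : ℕ → Fin 3) : Subgroup ↥TreeAut :=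
  Subgroup.closure {aAut * bAut ω, dAut ω}

/-- The `n`-fold shift `σⁿω`. -/
def shift (n : ℕ) (ω : ℕ → Fin 3) : ℕ → Fin 3 := fun m => ω (m + n)

/-- `Ω_∞`: sequences in which each of `0, 1, 2` occurs infinitely often. -/
def OmegaInf : Set (ℕ → Fin 3) := {ω | ∀ k : Fin 3, ∀ N : ℕ, ∃ n, N ≤ n ∧ ω n = k}

/-- `g` fixes every word of length `n`. -/
def fixesLevel (g : ↥TreeAut) (n : ℕ) : Prop := ∀ w : Word, w.length = n → ap g w = w

/-- The subgroup of all tree automorphisms acting trivially outside the subtree `uX*`. -/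
def ristSubgroup (u : Word) : Subgroup ↥TreeAut where
  carrier := {g | ∀ w : Word, ¬ u <+: w → ap g w = w}
  one_mem' := by intro w _; rfl
  mul_mem' := by
    intro g h hg hh w hw
    have e1 : ap g w = w := hg w hw
    have e2 : ap h w = w := hh w hw
    simp only [ap] at e1 e2
    show (g : Equiv.Perm Word) ((h : Equiv.Perm Word) w) = w
    rw [e2, e1]
  inv_mem' := by
    intro g hg w hw
    have h1' : ap g w = w := hg w hw
    have h1 : (g : Equiv.Perm Word) w = w := h1'
    show ((g : Equiv.Perm Word))⁻¹ w = w
    conv_lhs => rw [← h1]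
    simp

/-- The subgroup of all tree automorphisms fixing every word of length `n`
(the `n`-th level stabilizer in `Aut(X*)`). -/
def levelStab (n : ℕ) : Subgroup ↥TreeAut where
  carrier := {g | fixesLevel g n}
  one_mem' := by intro w _; rfl
  mul_mem' := by
    intro g h hg hh w hw
    have e1 : ap g w = w := hg w hw
    have e2 : ap h w = w := hh w hw
    simp only [ap] at e1 e2
    show (g : Equiv.Perm Word) ((h : Equiv.Perm Word) w) = w
    rw [e2, e1]
  inv_mem' := by
    intro g hg w hw
    have h1' : ap g w = w := hg w hw
    have h1 : (g : Equiv.Perm Word) w = w := h1'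
    show ((g : Equiv.Perm Word))⁻¹ w = w
    conv_lhs => rw [← h1]
    simp

/-- The rigid level stabilizer `Rist_G(n)`: the subgroup generated by the rigid vertex
stabilizers `Rist_G(u) = G ⊓ ristSubgroup u` over all words `u` of length `n`. -/
def ristLevel (G : Subgroup ↥TreeAut) (n : ℕ) : Subgroup ↥TreeAut :=
  ⨆ u ∈ {u : Word | u.length = n}, G ⊓ ristSubgroup u

/-- `G` acts transitively on each level of the tree. -/
def LevelTransitive (G : Subgroup ↥TreeAut) : Prop :=
  ∀ u v : Word, u.length = v.length → ∃ g ∈ G, ap g u = v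

/-- A set of tree automorphisms acts level transitively on the subtree `vX*`. -/
def LevelTransitiveOn (S : Set ↥TreeAut) (v : Word) : Prop :=
  ∀ u₁ u₂ : Word, u₁.length = u₂.length → ∃ g ∈ S, ap g (v ++ u₁) = v ++ u₂

/-- `L_{n,ω}`: `L_{0,ω} = L_ω` and `L_{n,ω}` is generated by the squares of
elements of `L_{n-1,ω}`. -/
def Lsq (ω : ℕ → Fin 3) : ℕ → Subgroup ↥TreeAut
  | 0 => Lgrp ω
  | n + 1 => Subgroup.closure {x | ∃ y ∈ Lsq ω n, x = y * y}

/-- `g` is active at the word `v`: the section `g_v` acts nontrivially on the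
one-letter words. -/
def IsActive (g : ↥TreeAut) (v : Word) : Prop :=
  ap g (v ++ [false]) ≠ ap g v ++ [false]

open scoped Classical in
/-- `p(g)_n`: the number of words of length `n` at which `g` is active, mod 2
(words of length `n` are enumerated as `List.ofFn f` for `f : Fin n → Bool`). -/
noncomputable def pMap (g : ↥TreeAut) (n : ℕ) : ZMod 2 :=
  (((Finset.univ : Finset (Fin n → Bool)).filter
    (fun f => IsActive g (List.ofFn f))).card : ZMod 2)

section Test
def gAut (k : Fin 3) (ω : ℕ → Fin 3) : ↥TreeAut :=
  mkAut (genFun k ω) (fun w => genFun_invol k w ω) (fun w => genFun_length k w ω)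
    (fun u v h => genFun_prefix k u v ω h)

example : bAut = gAut 2 := rfl
example : dAut = gAut 0 := rfl
@[simp] lemma ap_mul (g h : ↥TreeAut) (w : Word) : ap (g * h) w = ap g (ap h w) := rfl
@[simp] lemma ap_one (w : Word) : ap 1 w = w := rfl
@[simp] lemma ap_gAut (k : Fin 3) (ω : ℕ → Fin 3) (w : Word) : ap (gAut k ω) w = genFun k ω w := rfl
@[simp] lemma ap_aAut (w : Word) : ap aAut w = aFun w := rfl
lemma gAut_mul_self (k : Fin 3) (ω : ℕ → Fin 3) : gAut k ω * gAut k ω = 1 := by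
  apply Subtype.ext; apply Equiv.ext; intro w; exact genFun_invol k w ω
lemma aAut_mul_self : aAut * aAut = 1 := by
  apply Subtype.ext; apply Equiv.ext; intro w; exact aFun_invol w
@[simp] lemma gAut_inv (k : Fin 3) (ω : ℕ → Fin 3) : (gAut k ω)⁻¹ = gAut k ω :=
  inv_eq_of_mul_eq_one_left (gAut_mul_self k ω)
@[simp] lemma aAut_inv : aAut⁻¹ = aAut := inv_eq_of_mul_eq_one_left aAut_mul_self
@[simp] lemma genFun_nil (k : Fin 3) (ω : ℕ → Fin 3) : genFun k ω [] = [] := rfl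
@[simp] lemma genFun_false' (k : Fin 3) (ω : ℕ → Fin 3) (v : Word) :
    genFun k ω (false :: v) = false :: (if ω 0 = k then v else aFun v) := rfl
@[simp] lemma genFun_true' (k : Fin 3) (ω : ℕ → Fin 3) (v : Word) :
    genFun k ω (true :: v) = true :: genFun k (shift 1 ω) v := rfl
@[simp] lemma aFun_nil : aFun [] = [] := rfl
@[simp] lemma aFun_cons (x : Bool) (v : Word) : aFun (x :: v) = (!x) :: v := rfl
@[simp] lemma genFun_genFun (k : Fin 3) (ω : ℕ → Fin 3) (v : Word) :
    genFun k ω (genFun k ω v) = v := genFun_invol k v ω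
@[simp] lemma aFun_aFun (v : Word) : aFun (aFun v) = v := aFun_invol v
lemma ap_ap_inv (g : ↥TreeAut) (v : Word) : ap g (ap g⁻¹ v) = v := by
  show (g : Equiv.Perm Word) (((g⁻¹ : ↥TreeAut) : Equiv.Perm Word) v) = v
  simp
lemma ap_inj (g : ↥TreeAut) : Function.Injective (ap g) := (g : Equiv.Perm Word).injective
end Test
lemma fin3 : ∀ a b c d : Fin 3, a ≠ b → c ≠ a → c ≠ b → d ≠ a → d ≠ b → d = c := by decide

lemma genFun_comp (k1 k2 k3 : Fin 3) (h12 : k1 ≠ k2) (h31 : k3 ≠ k1) (h32 : k3 ≠ k2) :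
    ∀ (w : Word) (ω : ℕ → Fin 3), genFun k1 ω (genFun k2 ω w) = genFun k3 ω w
  | [], _ => rfl
  | false :: v, ω => by
    by_cases h1 : ω 0 = k1
    · have h2 : ¬ ω 0 = k2 := by rw [h1]; exact h12
      have h3 : ¬ ω 0 = k3 := by rw [h1]; exact (Ne.symm h31)
      simp [h1, h12, h2, h3, Ne.symm h31]
    · by_cases h2 : ω 0 = k2
      · have h3 : ¬ ω 0 = k3 := by rw [h2]; exact (Ne.symm h32)
        simp [h1, h2, h3, Ne.symm h12, Ne.symm h32]
      · have h3 : ω 0 = k3 := fin3 k1 k2 k3 (ω 0) h12 h31 h32 h1 h2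
        simp [h1, h2, h3, h31, h32]
  | true :: v, ω => by
    simp only [genFun_true']
    rw [genFun_comp k1 k2 k3 h12 h31 h32 v (shift 1 ω)]

def Kgrp (ks kt : Fin 3) (ω : ℕ → Fin 3) : Subgroup ↥TreeAut :=
  Subgroup.closure {aAut * gAut ks ω, gAut kt ω}

def KsqG (ks kt : Fin 3) (ω : ℕ → Fin 3) : ℕ → Subgroup ↥TreeAut
  | 0 => Kgrp ks kt ω
  | n + 1 => Subgroup.closure {x | ∃ y ∈ KsqG ks kt ω n, x = y * y}

lemma Lsq_eq_KsqG (ω : ℕ → Fin 3) : ∀ n, Lsq ω n = KsqG 2 0 ω n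
  | 0 => rfl
  | n + 1 => by
    show Subgroup.closure _ = Subgroup.closure _
    rw [Lsq_eq_KsqG ω n]

lemma sq_mem {ks kt : Fin 3} {ω : ℕ → Fin 3} {n : ℕ} {y : ↥TreeAut}
    (hy : y ∈ KsqG ks kt ω n) : y * y ∈ KsqG ks kt ω (n + 1) :=
  Subgroup.subset_closure ⟨y, hy, rfl⟩

lemma KsqG_one_le (ks kt : Fin 3) (ω : ℕ → Fin 3) : KsqG ks kt ω 1 ≤ KsqG ks kt ω 0 := by
  show Subgroup.closure _ ≤ _
  apply (Subgroup.closure_le _).2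
  rintro x ⟨y, hy, rfl⟩
  exact mul_mem hy hy

lemma ap_length (g : ↥TreeAut) (w : Word) : (ap g w).length = w.length := g.2.1 w
lemma ap_prefix (g : ↥TreeAut) {u v : Word} (h : u <+: v) : ap g u <+: ap g v := (g.2.2 u v).1 h

lemma ap_child (g : ↥TreeAut) (u : Word) (c : Bool) :
    ∃ c' : Bool, ap g (u ++ [c]) = ap g u ++ [c'] := by
  obtain ⟨t, ht⟩ := ap_prefix g (⟨[c], rfl⟩ : u <+: u ++ [c])
  have h1 : (ap g u).length + t.length = u.length + 1 := by
    have h := ap_length g (u ++ [c])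
    rw [← ht] at h
    simpa using h
  have h2 : t.length = 1 := by have := ap_length g u; omega
  match t, h2 with
  | [c'], _ => exact ⟨c', ht.symm⟩

lemma ap_fix_of_child {g : ↥TreeAut} {u : Word} {c c' : Bool}
    (h : ap g (u ++ [c]) = u ++ [c']) : ap g u = u := by
  obtain ⟨c'', hc⟩ := ap_child g u c
  rw [hc] at h
  exact (List.append_inj' h rfl).1

lemma ap_swap {g : ↥TreeAut} {u : Word} {c c' : Bool}
    (h : ap g (u ++ [c]) = ap g u ++ [c']) :
    ap g (u ++ [!c]) = ap g u ++ [!c'] := by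
  obtain ⟨c'', hc⟩ := ap_child g u (!c)
  have hne : c'' ≠ c' := by
    intro he
    rw [he, ← h] at hc
    have := ap_inj g hc
    have := (List.append_inj' this rfl).2
    simp at this
  have : c'' = !c' := by cases c'' <;> cases c' <;> simp_all
  rw [hc, this]
/-- The next type pair after descending one level. -/
def KP (ks kt : Fin 3) (ω : ℕ → Fin 3) : Fin 3 × Fin 3 :=
  if ω 0 = kt then (ks, kt) else if ω 0 = ks then (kt, ks) else (ks, ω 0)

lemma KP_ne {ks kt : Fin 3} (hst : ks ≠ kt) (ω : ℕ → Fin 3) :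
    (KP ks kt ω).1 ≠ (KP ks kt ω).2 := by
  unfold KP
  split_ifs with h1 h2
  · exact hst
  · exact hst.symm
  · exact fun h => h2 h.symm

/-- The conjugator used when descending. -/
def kapAut (ks kt : Fin 3) (ω : ℕ → Fin 3) (x : Bool) : ↥TreeAut :=
  if ω 0 = kt ∧ x = false then gAut ks (shift 1 ω) else 1

lemma ap_kap_kap (ks kt : Fin 3) (ω : ℕ → Fin 3) (x : Bool) (w : Word) :
    ap (kapAut ks kt ω x) (ap (kapAut ks kt ω x) w) = w := by
  unfold kapAut
  split <;> simp

/-- `h` acts on the subtree `x::·` as `κ l κ`. -/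
def SecP (κ : ↥TreeAut) (x : Bool) (l h : ↥TreeAut) : Prop :=
  ∀ w : Word, ap h (x :: w) = x :: ap κ (ap l (ap κ w))

lemma SecP_one (κ : ↥TreeAut) (x : Bool) (hκ : ∀ w, ap κ (ap κ w) = w) : SecP κ x 1 1 := by
  intro w; simp [hκ]

lemma SecP_mul {κ : ↥TreeAut} {x : Bool} {l₁ l₂ h₁ h₂ : ↥TreeAut}
    (hκ : ∀ w, ap κ (ap κ w) = w) (p₁ : SecP κ x l₁ h₁) (p₂ : SecP κ x l₂ h₂) :
    SecP κ x (l₁ * l₂) (h₁ * h₂) := by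
  intro w
  rw [ap_mul, p₂ w, p₁ _, hκ, ap_mul]

lemma SecP_inv {κ : ↥TreeAut} {x : Bool} {l h : ↥TreeAut}
    (hκ : ∀ w, ap κ (ap κ w) = w) (p : SecP κ x l h) : SecP κ x l⁻¹ h⁻¹ := by
  intro w
  apply ap_inj h
  rw [ap_ap_inv, p _, hκ, ap_ap_inv, hκ]
lemma lift0 (ks kt : Fin 3) (hst : ks ≠ kt) (ω : ℕ → Fin 3) (x : Bool) :
    ∀ l ∈ Kgrp (KP ks kt ω).1 (KP ks kt ω).2 (shift 1 ω),
      ∃ h ∈ KsqG ks kt ω 1, SecP (kapAut ks kt ω x) x l h := by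
  intro l hl
  have hκκ := ap_kap_kap ks kt ω x
  induction hl using Subgroup.closure_induction with
  | one => exact ⟨1, one_mem _, SecP_one _ _ hκκ⟩
  | mul y z hy hz ihy ihz =>
    obtain ⟨h₁, m₁, p₁⟩ := ihy; obtain ⟨h₂, m₂, p₂⟩ := ihz
    exact ⟨h₁ * h₂, mul_mem m₁ m₂, SecP_mul hκκ p₁ p₂⟩
  | inv y hy ihy =>
    obtain ⟨h₁, m₁, p₁⟩ := ihy
    exact ⟨h₁⁻¹, inv_mem m₁, SecP_inv hκκ p₁⟩
  | mem y hy =>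
    simp only [Set.mem_insert_iff, Set.mem_singleton_iff] at hy
    have hXm : aAut * gAut ks ω ∈ KsqG ks kt ω 0 :=
      Subgroup.subset_closure (Set.mem_insert _ _)
    have htm : gAut kt ω ∈ KsqG ks kt ω 0 :=
      Subgroup.subset_closure (Set.mem_insert_of_mem _ rfl)
    have hXTm : (aAut * gAut ks ω) * gAut kt ω ∈ KsqG ks kt ω 0 := mul_mem hXm htm
    have hTXTm : gAut kt ω * ((aAut * gAut ks ω) * gAut kt ω) ∈ KsqG ks kt ω 0 :=
      mul_mem htm hXTm
    by_cases h1 : ω 0 = kt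
    · -- Case I
      have h1s : ¬ ω 0 = ks := by rw [h1]; exact Ne.symm hst
      rcases hy with rfl | rfl
      · cases x
        · refine ⟨_, sq_mem hXm, fun w => ?_⟩
          simp [KP, kapAut, h1, Ne.symm hst]
        · refine ⟨_, sq_mem hXm, fun w => ?_⟩
          simp [KP, kapAut, h1, Ne.symm hst]
      · cases x
        · refine ⟨_, mul_mem (sq_mem hXTm) (inv_mem (sq_mem hXm)), fun w => ?_⟩
          simp [KP, kapAut, h1, Ne.symm hst, mul_inv_rev]
        · refine ⟨_, mul_mem (inv_mem (sq_mem hXm)) (sq_mem hXTm), fun w => ?_⟩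
          simp [KP, kapAut, h1, Ne.symm hst, mul_inv_rev]
    · by_cases h2 : ω 0 = ks
      · -- Case III
        have h2t : ¬ ω 0 = kt := h1
        rcases hy with rfl | rfl
        · -- g1 = a * gAut kt ω'  (map A∘T)
          cases x
          · refine ⟨_, inv_mem (mul_mem (sq_mem hXm) (sq_mem hXTm)), fun w => ?_⟩
            simp [KP, kapAut, h1, h2, hst, mul_inv_rev]
          · refine ⟨_, mul_mem (sq_mem hXTm) (sq_mem hTXTm), fun w => ?_⟩
            simp [KP, kapAut, h1, h2, hst, mul_inv_rev]
        · -- g2 = gAut ks ω'  (map S)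
          cases x
          · refine ⟨_, sq_mem hXm, fun w => ?_⟩
            simp [KP, kapAut, h1, h2, hst]
          · refine ⟨_, sq_mem hXm, fun w => ?_⟩
            simp [KP, kapAut, h1, h2, hst]
      · -- Case II
        have h2s : ω 0 ≠ ks := h2
        have h1t : ω 0 ≠ kt := h1
        rcases hy with rfl | rfl
        · cases x
          · refine ⟨_, sq_mem hTXTm, fun w => ?_⟩
            simp [KP, kapAut, h1, h2]
          · refine ⟨_, sq_mem hXm, fun w => ?_⟩
            simp [KP, kapAut, h1, h2]
        · cases x
          · refine ⟨_, sq_mem hXTm, fun w => ?_⟩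
            simp [KP, kapAut, h1, h2, genFun_comp ks kt (ω 0) hst h2s h1t]
          · refine ⟨_, sq_mem hXTm, fun w => ?_⟩
            simp [KP, kapAut, h1, h2, genFun_comp ks kt (ω 0) hst h2s h1t]
lemma liftN (n : ℕ) (ks kt : Fin 3) (hst : ks ≠ kt) (ω : ℕ → Fin 3) (x : Bool) :
    ∀ l ∈ KsqG (KP ks kt ω).1 (KP ks kt ω).2 (shift 1 ω) n,
      ∃ h ∈ KsqG ks kt ω (n + 1), SecP (kapAut ks kt ω x) x l h := by
  induction n with
  | zero => exact lift0 ks kt hst ω x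
  | succ n ih =>
    intro l hl
    have hκκ := ap_kap_kap ks kt ω x
    induction hl using Subgroup.closure_induction with
    | one => exact ⟨1, one_mem _, SecP_one _ _ hκκ⟩
    | mul y z hy hz ihy ihz =>
      obtain ⟨h₁, m₁, p₁⟩ := ihy; obtain ⟨h₂, m₂, p₂⟩ := ihz
      exact ⟨h₁ * h₂, mul_mem m₁ m₂, SecP_mul hκκ p₁ p₂⟩
    | inv y hy ihy =>
      obtain ⟨h₁, m₁, p₁⟩ := ihy
      exact ⟨h₁⁻¹, inv_mem m₁, SecP_inv hκκ p₁⟩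
    | mem y hy =>
      obtain ⟨z, hz, rfl⟩ := hy
      obtain ⟨h, hm, he⟩ := ih z hz
      exact ⟨h * h, sq_mem hm, SecP_mul hκκ he he⟩

lemma transKsq : ∀ (N : ℕ) (u : Word), u.length = N → ∀ (n : ℕ) (ks kt : Fin 3),
    ks ≠ kt → ∀ (ω : ℕ → Fin 3), n ≤ N →
    ∃ h ∈ KsqG ks kt ω n, ap h (u ++ [false]) = u ++ [true] := by
  intro N
  induction N with
  | zero =>
    intro u hu n ks kt hst ω hn
    obtain rfl : u = [] := List.eq_nil_of_length_eq_zero hu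
    obtain rfl : n = 0 := Nat.le_zero.mp hn
    refine ⟨aAut * gAut ks ω, Subgroup.subset_closure (Set.mem_insert _ _), ?_⟩
    simp
  | succ N ihN =>
    intro u hu n ks kt hst ω hn
    cases u with
    | nil => simp at hu
    | cons x u' =>
      have hu' : u'.length = N := by simpa using hu
      have hκκ := ap_kap_kap ks kt ω x
      set κ := kapAut ks kt ω x with hκdef
      obtain ⟨l, hl, hle⟩ := ihN (ap κ u') (by rw [ap_length]; exact hu') (n - 1)
        (KP ks kt ω).1 (KP ks kt ω).2 (KP_ne hst ω) (shift 1 ω) (by omega)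
      obtain ⟨h, hhm, hhe⟩ := liftN (n - 1) ks kt hst ω x l hl
      refine ⟨h, ?_, ?_⟩
      · rcases Nat.eq_zero_or_pos n with rfl | hpos
        · exact KsqG_one_le ks kt ω hhm
        · have hmn : n - 1 + 1 = n := by omega
          rwa [hmn] at hhm
      · have hlw : ap l (ap κ u') = ap κ u' := ap_fix_of_child hle
        have hl0 : ap l (ap κ u' ++ [false]) = ap l (ap κ u') ++ [true] := by
          rw [hlw]; exact hle
        have hl1 : ap l (ap κ u' ++ [true]) = ap l (ap κ u') ++ [false] := by
          simpa using ap_swap hl0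
        obtain ⟨c₀, hc₀⟩ := ap_child κ u' false
        have hκswap : ap κ (u' ++ [true]) = ap κ u' ++ [!c₀] := by
          simpa using ap_swap hc₀
        show ap h (x :: (u' ++ [false])) = x :: (u' ++ [true])
        rw [hhe, hc₀]
        cases c₀
        · rw [hl0, hlw, ← show ap κ (u' ++ [true]) = ap κ u' ++ [true] by simpa using hκswap,
            hκκ]
        · rw [hl1, hlw, ← show ap κ (u' ++ [true]) = ap κ u' ++ [false] by simpa using hκswap,
            hκκ]
lemma stmt_aux (ω : ℕ → Fin 3) (n : ℕ) (v : Word) (hv : v.length = n) :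
    ∀ (m : ℕ) (u₁ u₂ : Word), u₁.length = u₂.length → u₂.length = m →
      ∃ g ∈ KsqG 2 0 ω n, ap g (v ++ u₁) = v ++ u₂ := by
  intro m
  induction m with
  | zero =>
    intro u₁ u₂ h12 h2
    obtain rfl : u₂ = [] := List.eq_nil_of_length_eq_zero h2
    obtain rfl : u₁ = [] := List.eq_nil_of_length_eq_zero h12
    exact ⟨1, one_mem _, by simp⟩
  | succ m ih =>
    intro u₁ u₂ h12 h2
    rcases List.eq_nil_or_concat u₁ with rfl | ⟨t₁, c₁, rfl⟩
    · simp at h12; omega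
    rcases List.eq_nil_or_concat u₂ with rfl | ⟨t₂, c₂, rfl⟩
    · simp at h2
    have ht : t₁.length = t₂.length := by
      simp [List.concat_eq_append] at h12; omega
    have ht2 : t₂.length = m := by
      simp [List.concat_eq_append] at h2; omega
    obtain ⟨g, hg, hge⟩ := ih t₁ t₂ ht ht2
    obtain ⟨c, hc⟩ := ap_child g (v ++ t₁) c₁
    rw [hge] at hc
    by_cases hcc : c = c₂
    · refine ⟨g, hg, ?_⟩
      rw [List.concat_eq_append, List.concat_eq_append, ← List.append_assoc,
        ← List.append_assoc, hc, hcc]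
    · have hcb : c₂ = !c := by cases c <;> cases c₂ <;> simp_all
      obtain ⟨h, hh, hhe⟩ := transKsq (v ++ t₂).length (v ++ t₂) rfl n 2 0 (by decide) ω
        (by rw [List.length_append, hv]; omega)
      have hfix : ap h (v ++ t₂) = v ++ t₂ := ap_fix_of_child hhe
      have h0 : ap h ((v ++ t₂) ++ [false]) = ap h (v ++ t₂) ++ [true] := by
        rw [hfix]; exact hhe
      have hgen : ap h ((v ++ t₂) ++ [c]) = (v ++ t₂) ++ [!c] := by
        cases c
        · simpa [hfix] using h0
        · simpa [hfix] using ap_swap h0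
      refine ⟨h * g, mul_mem hh hg, ?_⟩
      rw [List.concat_eq_append, List.concat_eq_append, ← List.append_assoc,
        ← List.append_assoc, ap_mul, hc, hgen, hcb]
/-- for every `ω ∈ Ω`, every `n` and every word `v` of length `n`,
`L_{n,ω}` acts level transitively on the subtree `vX*`. -/
theorem statement9 (ω : ℕ → Fin 3) (n : ℕ) (v : Word) (hv : v.length = n) :
    LevelTransitiveOn (↑(Lsq ω n) : Set ↥TreeAut) v := by
  rw [Lsq_eq_KsqG]
  intro u₁ u₂ hlen
  obtain ⟨g, hg, hge⟩ := stmt_aux ω n v hv u₂.length u₁ u₂ hlen rfl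
  exact ⟨g, hg, hge⟩
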